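/- There exists a real number Y such that for every real y ≥ Y, every real θ with 1 < θ < 2, and every squarefree natural number L ≥ 2 with the property that every prime q dividing L satisfies q ≤ y^θ and every prime r dividing q − 1 satisfies r ≤ y, the following holds: every multiset of elements of (ℤ/Lℤ)ˣ of cardinality at least exp(3θy) contains a nonempty sub-multiset whose product of elements equals 1. -/

import Mathlib

set_option linter.unusedSectionVars false

open Multiset

noncomputable section

variable {H : Type*} [CommGroup H]

/-- `Fel k g = single g 1 - 1` in the group algebra. -/
def Fel (k : Type*) [CommRing k] (g : H) : MonoidAlgebra k H :=
  MonoidAlgebra.of k H g - 1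

lemma fel_coeff_step (k : Type*) [CommRing k] (g : H) (Q : MonoidAlgebra k H) (x : H) :
    (Fel k g * Q).coeff x = Q.coeff (g⁻¹ * x) - Q.coeff x := by
  rw [Fel, sub_mul, one_mul]
  have h1 : (MonoidAlgebra.of k H g * Q).coeff x = Q.coeff (g⁻¹ * x) := by
    rw [MonoidAlgebra.of_apply, MonoidAlgebra.coeff_single_mul_apply, one_mul]
  have h2 : (MonoidAlgebra.of k H g * Q - Q).coeff x
      = (MonoidAlgebra.of k H g * Q).coeff x - Q.coeff x := rfl
  rw [h2, h1]

/-- Support lemma: nonzero coefficients of `∏ (g - 1)` occur only at subproducts. -/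
lemma support_sub_one (k : Type*) [CommRing k] (T : Multiset H) (x : H)
    (hx : ((T.map (Fel k)).prod).coeff x ≠ 0) : ∃ T' ≤ T, T'.prod = x := by
  induction T using Multiset.induction generalizing x with
  | empty =>
    refine ⟨0, le_refl _, ?_⟩
    simp only [Multiset.map_zero, Multiset.prod_zero] at hx
    rw [MonoidAlgebra.one_def, MonoidAlgebra.coeff_single] at hx
    by_contra h
    rw [Multiset.prod_zero] at h
    exact hx (Finsupp.single_eq_of_ne' h)
  | cons g T₀ ih =>
    rw [Multiset.map_cons, Multiset.prod_cons, fel_coeff_step] at hx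
    set Q := (T₀.map (Fel k)).prod with hQ
    by_cases h2 : Q.coeff x = 0
    · have h1 : Q.coeff (g⁻¹ * x) ≠ 0 := by
        intro h1; exact hx (by rw [h1, h2, sub_zero])
      obtain ⟨T', hle, hprod⟩ := ih _ h1
      exact ⟨g ::ₘ T', Multiset.cons_le_cons g hle, by
        rw [Multiset.prod_cons, hprod, mul_inv_cancel_left]⟩
    · obtain ⟨T', hle, hprod⟩ := ih _ h2
      exact ⟨T', le_trans hle (Multiset.le_cons_self T₀ g), hprod⟩

/-- The coefficient at `1` of `∏_{g ∈ T} (g - 1)` for a zero-sum free multiset. -/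
lemma coeff_one_of_zsfree (k : Type*) [CommRing k] (T : Multiset H)
    (hfree : ∀ T' ≤ T, T' ≠ 0 → T'.prod ≠ 1) :
    ((T.map (Fel k)).prod).coeff 1 = (-1 : k) ^ Multiset.card T := by
  induction T using Multiset.induction with
  | empty =>
    simp only [Multiset.map_zero, Multiset.prod_zero, Multiset.card_zero, pow_zero]
    rw [MonoidAlgebra.one_def, MonoidAlgebra.coeff_single]
    exact Finsupp.single_eq_same
  | cons g T₀ ih =>
    rw [Multiset.map_cons, Multiset.prod_cons, fel_coeff_step]
    have hfree₀ : ∀ T' ≤ T₀, T' ≠ 0 → T'.prod ≠ 1 := fun T' h hne =>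
      hfree T' (le_trans h (Multiset.le_cons_self T₀ g)) hne
    have hQ1 : ((T₀.map (Fel k)).prod).coeff (g⁻¹ * 1) = 0 := by
      by_contra h
      obtain ⟨T', hle, hprod⟩ := support_sub_one k T₀ _ h
      refine hfree (g ::ₘ T') (Multiset.cons_le_cons g hle) (Multiset.cons_ne_zero) ?_
      rw [Multiset.prod_cons, hprod, mul_one, mul_inv_cancel]
    rw [hQ1, ih hfree₀, Multiset.card_cons, zero_sub, pow_succ, mul_comm, neg_one_mul]

end

section Key2

open MvPolynomial

variable {ι : Type} [Fintype ι] [DecidableEq ι] (p : ℕ) [Fact p.Prime] (n : ι → ℕ)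

/-- the model group -/
abbrev HP (n : ι → ℕ) : Type := (i : ι) → Multiplicative (ZMod (n i))

/-- basis elements -/
def bel (i : ι) : HP n :=
  Pi.mulSingle i (Multiplicative.ofAdd (1 : ZMod (n i)))

lemma charP_MA : CharP (MonoidAlgebra (ZMod p) (HP n)) p :=
  charP_of_injective_algebraMap
    (R := ZMod p) (A := MonoidAlgebra (ZMod p) (HP n))
    (fun a b hab => by
      have := congrArg (fun f => (f : MonoidAlgebra (ZMod p) (HP n)).coeff 1) hab
      simpa [MonoidAlgebra.coe_algebraMap, MonoidAlgebra.coeff_single, Finsupp.single_eq_same] using this) p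

lemma bel_pow_n (i : ι) : (bel n i) ^ (n i) = 1 := by
  rw [bel, ← Pi.mulSingle_pow, ← ofAdd_nsmul]
  have : (n i) • (1 : ZMod (n i)) = 0 := by
    simp [nsmul_eq_mul, ZMod.natCast_self]
  rw [this]
  simp

lemma xel_pow_n (i : ι) (e : ℕ) (he : n i = p ^ e) :
    (Fel (ZMod p) (bel n i)) ^ (n i) = 0 := by
  haveI := charP_MA p n
  rw [Fel, he, sub_pow_char_pow]
  rw [← _root_.map_pow, ← he, bel_pow_n, _root_.map_one, one_pow, sub_self]

/-- exponent of g in coordinate i -/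
noncomputable def cExp (g : (HP n)) (i : ι) : ℕ := (Multiplicative.toAdd (g i)).val

/-- polynomial lift of `Fel` -/
noncomputable def Pel (g : (HP n)) : MvPolynomial ι (ZMod p) :=
  (∏ i, (1 + MvPolynomial.X i) ^ (cExp n g i)) - 1

lemma prod_bel (hn : ∀ i, 1 < n i) (g : (HP n)) :
    (∏ i, (bel n i) ^ (cExp n g i)) = g := by
  have h : ∀ i, (bel n i) ^ (cExp n g i)
      = Pi.mulSingle i ((Multiplicative.ofAdd (1 : ZMod (n i))) ^ (cExp n g i)) := by
    intro i; rw [bel, Pi.mulSingle_pow]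
  rw [funext h] at *
  · rw [show (∏ i, Pi.mulSingle i ((Multiplicative.ofAdd (1 : ZMod (n i))) ^ (cExp n g i))) =
        ∏ i, Pi.mulSingle i ((fun j => (Multiplicative.ofAdd (1 : ZMod (n j))) ^ (cExp n g j)) i)
        from rfl, Finset.univ_prod_mulSingle]
    funext i
    haveI : NeZero (n i) := ⟨by have := hn i; omega⟩
    rw [← ofAdd_nsmul, cExp]
    simp only [nsmul_eq_mul, mul_one]
    rw [ZMod.natCast_val, ZMod.cast_id]
    rfl

lemma aeval_Pel (hn : ∀ i, 1 < n i) (g : (HP n)) :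
    MvPolynomial.aeval (fun i => Fel (ZMod p) (bel n i)) (Pel p n g)
      = Fel (ZMod p) g := by
  rw [Pel, _root_.map_sub, _root_.map_one, Fel]
  congr 1
  have h1 : ∀ i ∈ Finset.univ,
      (MvPolynomial.aeval (fun i => Fel (ZMod p) (bel n i)))
        ((1 + MvPolynomial.X (R := ZMod p) i) ^ (cExp n g i))
      = (MonoidAlgebra.of (ZMod p) (HP n) ((bel n i) ^ (cExp n g i))) := by
    intro i _
    rw [_root_.map_pow, _root_.map_add, _root_.map_one, MvPolynomial.aeval_X, Fel, add_sub_cancel, _root_.map_pow]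
  rw [_root_.map_prod, Finset.prod_congr rfl h1, ← _root_.map_prod, prod_bel n hn g]

lemma constantCoeff_Pel (g : (HP n)) :
    MvPolynomial.constantCoeff (Pel p n g) = 0 := by
  rw [Pel, _root_.map_sub, _root_.map_one, _root_.map_prod]
  have h1 : ∀ i ∈ Finset.univ,
      MvPolynomial.constantCoeff ((1 + MvPolynomial.X (R := ZMod p) i) ^ (cExp n g i))
      = 1 := by
    intro i _
    rw [_root_.map_pow, _root_.map_add, _root_.map_one, MvPolynomial.constantCoeff_X, add_zero, one_pow]
  rw [Finset.prod_congr rfl h1, Finset.prod_const_one, sub_self]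

end Key2

section Key2b

open MvPolynomial

variable {ι : Type} [Fintype ι] [DecidableEq ι] (p : ℕ) [Fact p.Prime] (n : ι → ℕ)

lemma deg_ge_card (T : Multiset (HP n)) (a : ι →₀ ℕ)
    (ha : a ∈ ((T.map (Pel p n)).prod).support) :
    Multiset.card T ≤ ∑ i, a i := by
  induction T using Multiset.induction generalizing a with
  | empty => simp
  | cons g T₀ ih =>
    rw [Multiset.map_cons, Multiset.prod_cons] at ha
    have hs := MvPolynomial.support_mul _ _ ha
    rw [Finset.mem_add] at hs
    obtain ⟨a₁, h₁, a₂, h₂, rfl⟩ := hs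
    have ha₁ : a₁ ≠ 0 := by
      intro h0
      rw [h0] at h₁
      rw [MvPolynomial.mem_support_iff] at h₁
      exact h₁ (by
        have := constantCoeff_Pel p n g
        rwa [show MvPolynomial.constantCoeff (Pel p n g) = MvPolynomial.coeff 0 (Pel p n g)
          from rfl] at this)
    have h1le : 1 ≤ ∑ i, a₁ i := by
      by_contra hle
      push_neg at hle
      rw [Nat.lt_one_iff] at hle
      apply ha₁
      ext j
      simp only [Finsupp.coe_zero, Pi.zero_apply]
      have : a₁ j ≤ ∑ i, a₁ i := Finset.single_le_sum (fun i _ => Nat.zero_le _)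
        (Finset.mem_univ j)
      omega
    have h2le := ih a₂ h₂
    rw [Multiset.card_cons]
    have : ∑ i, (a₁ + a₂) i = (∑ i, a₁ i) + ∑ i, a₂ i := by
      rw [← Finset.sum_add_distrib]; rfl
    omega

lemma key2 (hn : ∀ i, 1 < n i) (hpp : ∀ i, ∃ e, n i = p ^ e)
    (T : Multiset (HP n)) (hcard : 1 + ∑ i, (n i - 1) ≤ Multiset.card T) :
    ((T.map (Fel (ZMod p))).prod) = 0 := by
  have hmap : T.map (Fel (ZMod p))
      = (T.map (Pel p n)).map (MvPolynomial.aeval (fun i => Fel (ZMod p) (bel n i))) := by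
    rw [Multiset.map_map]
    exact Multiset.map_congr rfl (fun g _ => (aeval_Pel p n hn g).symm)
  rw [hmap, ← _root_.map_multiset_prod]
  set q := (T.map (Pel p n)).prod with hq
  rw [MvPolynomial.as_sum q, _root_.map_sum]
  apply Finset.sum_eq_zero
  intro a ha
  rw [MvPolynomial.aeval_monomial]
  have hdeg := deg_ge_card p n T a (by rw [← hq]; exact ha)
  have hex : ∃ j, n j ≤ a j := by
    by_contra h
    push_neg at h
    have hle : ∑ i, a i ≤ ∑ i, (n i - 1) :=
      Finset.sum_le_sum (fun i _ => by have := h i; omega)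
    omega
  obtain ⟨j, hj⟩ := hex
  have hj0 : a j ≠ 0 := by have := hn j; omega
  have hzero : (Fel (ZMod p) (bel n j)) ^ (a j) = 0 := by
    obtain ⟨e, he⟩ := hpp j
    have h0 := xel_pow_n p n j e he
    obtain ⟨r, hr⟩ := Nat.exists_eq_add_of_le hj
    rw [hr, pow_add, h0, zero_mul]
  rw [Finsupp.prod, Finset.prod_eq_zero (Finsupp.mem_support_iff.mpr hj0) hzero, mul_zero]

end Key2b

/-- **Olson's theorem** (upper bound form) for finite abelian `p`-torsion groups. -/
theorem olson_p (G : Type*) [CommGroup G] [Fintype G] (p v : ℕ) (hp : p.Prime)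
    (hexp : ∀ x : G, x ^ (p ^ v) = 1) (M : Multiset G)
    (hcard : 1 + (Fintype.card G).factorization p * (p ^ v - 1) ≤ Multiset.card M) :
    ∃ M' ≤ M, M' ≠ 0 ∧ M'.prod = 1 := by
  by_contra hcon
  push_neg at hcon
  haveI := Fact.mk hp
  classical
  obtain ⟨ι, hι, n, hn, ⟨φ⟩⟩ := CommGroup.equiv_prod_multiplicative_zmod_of_finite G
  haveI : ∀ i, NeZero (n i) := fun i => ⟨by have := hn i; omega⟩
  -- each n i divides p ^ v
  have hdvd : ∀ i, n i ∣ p ^ v := by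
    intro i
    have h1 : (bel n i) ^ (p ^ v) = 1 := by
      have := hexp (φ.symm (bel n i))
      have h2 := congrArg φ this
      rwa [_root_.map_pow, MulEquiv.apply_symm_apply, _root_.map_one] at h2
    have h3 := congrFun h1 i
    rw [bel, ← Pi.mulSingle_pow, Pi.mulSingle_eq_same] at h3
    rw [Pi.one_apply] at h3
    have h4 : (p ^ v) • (1 : ZMod (n i)) = 0 := by
      have := congrArg Multiplicative.toAdd h3
      rwa [← ofAdd_nsmul] at this
    have h5 := addOrderOf_dvd_of_nsmul_eq_zero h4
    rwa [ZMod.addOrderOf_one] at h5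
  have hpe : ∀ i, ∃ e, 0 < e ∧ n i = p ^ e := by
    intro i
    obtain ⟨e, he, hne⟩ := (Nat.dvd_prime_pow hp).mp (hdvd i)
    refine ⟨e, ?_, hne⟩
    rcases Nat.eq_zero_or_pos e with h | h
    · exfalso; rw [h, pow_zero] at hne; have := hn i; omega
    · exact h
  choose e he1 he2 using hpe
  -- card G = p ^ (∑ e i)
  have hcardG : Fintype.card G = p ^ (∑ i, e i) := by
    rw [Fintype.card_congr φ.toEquiv]
    rw [Fintype.card_pi]
    have : ∀ i ∈ Finset.univ, Fintype.card (Multiplicative (ZMod (n i))) = p ^ e i := by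
      intro i _
      rw [Fintype.card_multiplicative, ZMod.card, he2 i]
    rw [Finset.prod_congr rfl this, Finset.prod_pow_eq_pow_sum]
  have hk : (Fintype.card G).factorization p = ∑ i, e i := by
    rw [hcardG, hp.factorization_pow, Finsupp.single_eq_same]
  have hcardι : Fintype.card ι ≤ ∑ i, e i := by
    calc Fintype.card ι = ∑ _i : ι, 1 := by simp
      _ ≤ ∑ i, e i := Finset.sum_le_sum (fun i _ => he1 i)
  -- transfer to model group
  set T : Multiset (HP n) := M.map φ with hT
  have hTfree : ∀ T' ≤ T, T' ≠ 0 → T'.prod ≠ 1 := by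
    intro T' hle hne hprod
    have hB : T'.map φ.symm ≤ M := by
      have := Multiset.map_le_map (f := φ.symm) hle
      rwa [hT, Multiset.map_map, show (⇑φ.symm ∘ ⇑φ) = id from funext (fun x => φ.symm_apply_apply x),
        Multiset.map_id] at this
    refine hcon (T'.map φ.symm) hB (by
      intro h0
      apply hne
      have := congrArg Multiset.card h0
      rw [Multiset.card_map] at this
      exact Multiset.card_eq_zero.mp this) ?_
    rw [← _root_.map_multiset_prod, hprod, _root_.map_one]
  -- the two computations of the coefficient
  have hc1 : ((T.map (Fel (ZMod p))).prod).coeff 1 = (-1 : ZMod p) ^ Multiset.card T :=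
    coeff_one_of_zsfree (ZMod p) T hTfree
  have hsum : ∑ i, (n i - 1) ≤ (Fintype.card G).factorization p * (p ^ v - 1) := by
    rw [hk]
    calc ∑ i, (n i - 1) ≤ ∑ _i : ι, (p ^ v - 1) := by
          apply Finset.sum_le_sum
          intro i _
          have := Nat.le_of_dvd (pow_pos hp.pos v) (hdvd i)
          omega
      _ = Fintype.card ι * (p ^ v - 1) := by
          rw [Finset.sum_const, Finset.card_univ, smul_eq_mul]
      _ ≤ (∑ i, e i) * (p ^ v - 1) := Nat.mul_le_mul_right _ hcardι
  have hc2 : ((T.map (Fel (ZMod p))).prod) = 0 := by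
    apply key2 p n hn (fun i => ⟨e i, he2 i⟩) T
    rw [hT, Multiset.card_map]
    omega
  rw [hc2] at hc1
  have : ((0 : MonoidAlgebra (ZMod p) (HP n))).coeff 1 = 0 := rfl
  rw [this] at hc1
  exact pow_ne_zero _ (neg_ne_zero.mpr one_ne_zero) hc1.symm

section Extraction

lemma exists_preimage_of_le_map {α β : Type*} [DecidableEq α] [DecidableEq β] (f : α → β) :
    ∀ (N' : Multiset β) (N : Multiset α), N' ≤ N.map f → ∃ B ≤ N, B.map f = N' := by
  intro N'
  induction N' using Multiset.induction with
  | empty => exact fun N _ => ⟨0, Multiset.zero_le N, rfl⟩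
  | cons a N'' ih =>
    intro N h
    have ha : a ∈ N.map f := Multiset.mem_of_le h (Multiset.mem_cons_self a N'')
    obtain ⟨x, hxN, hfx⟩ := Multiset.mem_map.mp ha
    have h2 : N'' ≤ (N.erase x).map f := by
      have h3 := Multiset.erase_le_erase a h
      rw [Multiset.erase_cons_head] at h3
      rw [← hfx] at h3
      rwa [Multiset.map_erase_of_mem f N hxN]
    obtain ⟨B'', hB''le, hB''map⟩ := ih (N.erase x) h2
    refine ⟨x ::ₘ B'', ?_, ?_⟩
    · calc x ::ₘ B'' ≤ x ::ₘ (N.erase x) := Multiset.cons_le_cons x hB''le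
        _ = N := Multiset.cons_erase hxN
    · rw [Multiset.map_cons, hfx, hB''map]

lemma exists_le_card_eq {α : Type*} (M : Multiset α) (b : ℕ) (h : b ≤ Multiset.card M) :
    ∃ N ≤ M, Multiset.card N = b := by
  refine ⟨(M.toList.take b : Multiset α), ?_, ?_⟩
  · have h1 : (M.toList.take b).Sublist M.toList := List.take_sublist _ _
    calc ((M.toList.take b : List α) : Multiset α) ≤ (M.toList : Multiset α) :=
          Multiset.coe_le.mpr h1.subperm
      _ = M := Multiset.coe_toList M
  · rw [Multiset.coe_card, List.length_take, Multiset.length_toList]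
    omega

lemma sum_le_sum_of_le {α : Type*} {C D : Multiset (Multiset α)} (h : C ≤ D) :
    C.sum ≤ D.sum := by
  obtain ⟨E, rfl⟩ := Multiset.le_iff_exists_add.mp h
  rw [Multiset.sum_add]
  exact le_add_right _ _

lemma prod_sum_multiset {G : Type*} [CommMonoid G] (S : Multiset (Multiset G)) :
    S.sum.prod = (S.map Multiset.prod).prod := by
  induction S using Multiset.induction with
  | empty => simp
  | cons B S ih => rw [Multiset.sum_cons, Multiset.prod_add, Multiset.map_cons,
      Multiset.prod_cons, ih]

variable {G : Type*} [CommGroup G] {K : Type*} [CommGroup K]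

lemma extract_blocks [DecidableEq G] (f : G →* K) (b : ℕ)
    (hK : ∀ N : Multiset K, b ≤ Multiset.card N → ∃ N' ≤ N, N' ≠ 0 ∧ N'.prod = 1) :
    ∀ (j : ℕ) (M : Multiset G), j * b ≤ Multiset.card M →
      ∃ Bs : Multiset (Multiset G), Multiset.card Bs = j ∧ Bs.sum ≤ M ∧
        ∀ B ∈ Bs, B ≠ 0 ∧ f B.prod = 1 := by
  intro j
  induction j with
  | zero => exact fun M _ => ⟨0, rfl, Multiset.zero_le M, by simp⟩
  | succ j ih =>
    intro M hM
    have hbM : b ≤ Multiset.card M := by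
      have : b ≤ (j+1) * b := by nlinarith
      omega
    obtain ⟨N, hNle, hNcard⟩ := exists_le_card_eq M b hbM
    obtain ⟨N', hN'le, hN'ne, hN'prod⟩ := hK (N.map f)
      (by rw [Multiset.card_map, hNcard])
    classical
    obtain ⟨B, hBle, hBmap⟩ := exists_preimage_of_le_map f N' N hN'le
    have hBne : B ≠ 0 := by
      intro h
      rw [h, Multiset.map_zero] at hBmap
      exact hN'ne hBmap.symm
    have hBprod : f B.prod = 1 := by
      rw [← hBmap, ← _root_.map_multiset_prod] at hN'prod
      exact hN'prod
    have hBM : B ≤ M := le_trans hBle hNle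
    have hcard' : j * b ≤ Multiset.card (M - B) := by
      rw [Multiset.card_sub hBM]
      have hcb : Multiset.card B ≤ b := by
        rw [← hNcard]; exact Multiset.card_le_card hBle
      have : (j+1) * b = j * b + b := by ring
      omega
    obtain ⟨Bs, hBsc, hBssum, hBsall⟩ := ih (M - B) hcard'
    refine ⟨B ::ₘ Bs, by rw [Multiset.card_cons, hBsc], ?_, ?_⟩
    · rw [Multiset.sum_cons]
      calc B + Bs.sum ≤ B + (M - B) := add_le_add (le_refl B) hBssum
        _ = M := add_tsub_cancel_of_le hBM
    · intro B' hB'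
      rcases Multiset.mem_cons.mp hB' with h | h
      · rw [h]; exact ⟨hBne, hBprod⟩
      · exact hBsall B' h

lemma extraction [DecidableEq G] (f : G →* K) (a b : ℕ)
    (hK : ∀ N : Multiset K, b ≤ Multiset.card N → ∃ N' ≤ N, N' ≠ 0 ∧ N'.prod = 1)
    (hker : ∀ N : Multiset ↥(f.ker), a ≤ Multiset.card N →
      ∃ N' ≤ N, N' ≠ 0 ∧ N'.prod = 1)
    (M : Multiset G) (hM : a * b ≤ Multiset.card M) :
    ∃ M' ≤ M, M' ≠ 0 ∧ M'.prod = 1 := by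
  classical
  obtain ⟨Bs, hBsc, hBssum, hBsall⟩ := extract_blocks f b hK a M hM
  set ζ : {B // B ∈ Bs} → ↥(f.ker) :=
    fun B => ⟨(B.1).prod, by rw [MonoidHom.mem_ker]; exact (hBsall B.1 B.2).2⟩ with hζ
  set Z : Multiset ↥(f.ker) := Bs.attach.map ζ with hZ
  have hZcard : a ≤ Multiset.card Z := by
    rw [hZ, Multiset.card_map, Multiset.card_attach, hBsc]
  obtain ⟨Z', hZ'le, hZ'ne, hZ'prod⟩ := hker Z hZcard
  obtain ⟨C, hCle, hCmap⟩ := exists_preimage_of_le_map ζ Z' Bs.attach hZ'le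
  set M' : Multiset G := (C.map Subtype.val).sum with hM'
  have hCBs : C.map Subtype.val ≤ Bs := by
    calc C.map Subtype.val ≤ Bs.attach.map Subtype.val := Multiset.map_le_map hCle
      _ = Bs := Multiset.attach_map_val Bs
  refine ⟨M', le_trans (sum_le_sum_of_le hCBs) hBssum, ?_, ?_⟩
  · -- nonzero
    have hCne : C ≠ 0 := by
      intro h
      rw [h, Multiset.map_zero] at hCmap
      exact hZ'ne hCmap.symm
    obtain ⟨x, hx⟩ := Multiset.exists_mem_of_ne_zero hCne
    have hxB : (x.1 : Multiset G) ∈ C.map Subtype.val := Multiset.mem_map_of_mem _ hx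
    obtain ⟨rest, hrest⟩ := Multiset.exists_cons_of_mem hxB
    intro h0
    rw [hM', hrest, Multiset.sum_cons] at h0
    have hcard0 := congrArg Multiset.card h0
    rw [Multiset.card_add, Multiset.card_zero] at hcard0
    have : x.1 = 0 := by
      have := (hBsall x.1 x.2).1
      rw [← Multiset.card_eq_zero]
      omega
    exact (hBsall x.1 x.2).1 this
  · -- product 1
    rw [hM', prod_sum_multiset]
    have hcoe : (C.map Subtype.val).map Multiset.prod = Z'.map (f.ker.subtype) := by
      rw [Multiset.map_map, ← hCmap, Multiset.map_map]
      rfl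
    rw [hcoe, ← _root_.map_multiset_prod, hZ'prod, _root_.map_one]

end Extraction

section MainInduction

universe u

/-- Davenport-type bound: in a finite abelian group all of whose elements satisfy `x ^ e = 1`,
any multiset of size at least `∏_{p ∣ e} (1 + Ω_p(|G|) (p^{v_p(e)} - 1))` has a nonempty
sub-multiset with product 1. -/
theorem davenport_main : ∀ (e : ℕ), 0 < e →
    ∀ (G : Type u) [CommGroup G] [Fintype G] [DecidableEq G],
      (∀ x : G, x ^ e = 1) →
      ∀ M : Multiset G,
        (∏ p ∈ e.primeFactors,
            (1 + (Fintype.card G).factorization p * (p ^ (e.factorization p) - 1)))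
          ≤ Multiset.card M →
        ∃ M' ≤ M, M' ≠ 0 ∧ M'.prod = 1 := by
  intro e
  induction e using Nat.strong_induction_on with
  | _ e ih =>
    intro he G _ _ _ hexp M hM
    by_cases he1 : e = 1
    · subst he1
      have h1 : (1 : ℕ).primeFactors = ∅ := Nat.primeFactors_one
      rw [h1, Finset.prod_empty] at hM
      have : M ≠ 0 := by
        intro h0
        rw [h0] at hM
        simp at hM
      obtain ⟨x, hx⟩ := Multiset.exists_mem_of_ne_zero this
      refine ⟨{x}, Multiset.singleton_le.mpr hx, by simp, ?_⟩
      rw [Multiset.prod_singleton, ← pow_one x, hexp x]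
    · -- e ≥ 2
      have he2 : 2 ≤ e := by omega
      set p := e.minFac with hpdef
      have hp : p.Prime := Nat.minFac_prime he1
      have hpd : p ∣ e := Nat.minFac_dvd e
      set v := e.factorization p with hvdef
      have hv : 0 < v := by
        rw [hvdef]
        exact Nat.Prime.factorization_pos_of_dvd hp (by omega) hpd
      set e' := ordCompl[p] e with he'def
      have he' : 0 < e' := Nat.ordCompl_pos p (by omega)
      have hee : p ^ v * e' = e := Nat.ordProj_mul_ordCompl_eq_self e p
      have hpv1 : 1 < p ^ v := by
        calc 1 < p := hp.one_lt
          _ ≤ p ^ v := Nat.le_self_pow (by omega) p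
      have hlt : e' < e := by
        rw [← hee]
        calc e' = 1 * e' := (one_mul e').symm
          _ < p ^ v * e' := by
            exact (Nat.mul_lt_mul_right he').mpr hpv1
      have hpe' : ¬ p ∣ e' := Nat.not_dvd_ordCompl hp (by omega)
      have hpnf : p ∉ e'.primeFactors := fun hmem =>
        hpe' (Nat.dvd_of_mem_primeFactors hmem)
      -- prime factor decomposition of e
      have hpf : e.primeFactors = insert p e'.primeFactors := by
        rw [← hee, Nat.primeFactors_mul (by positivity) (by omega),
          Nat.primeFactors_pow p (by omega), Nat.Prime.primeFactors hp,
          Finset.insert_eq]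
      have hfacq : ∀ q ∈ e'.primeFactors, e.factorization q = e'.factorization q := by
        intro q hq
        have hqp : q ≠ p := fun h => hpnf (h ▸ hq)
        rw [← hee, Nat.factorization_mul (by positivity) (by omega)]
        simp only [Finsupp.coe_add, Pi.add_apply]
        rw [Nat.Prime.factorization_pow hp, Finsupp.single_apply,
          if_neg (fun h => hqp h.symm), zero_add]
      set kG := (Fintype.card G).factorization with hkG
      set a := 1 + kG p * (p ^ v - 1) with hadef
      set b := ∏ q ∈ e'.primeFactors, (1 + kG q * (q ^ (e'.factorization q) - 1)) with hbdef
      have hab : a * b ≤ Multiset.card M := by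
        have : ∏ q ∈ e.primeFactors,
            (1 + kG q * (q ^ (e.factorization q) - 1)) = a * b := by
          rw [hpf, Finset.prod_insert hpnf, hadef, hbdef]
          congr 1
          exact Finset.prod_congr rfl (fun q hq => by rw [hfacq q hq])
        rw [← this]
        exact hM
      -- the homomorphism
      set f : G →* G := powMonoidHom (p ^ v) with hfdef
      set R := f.range with hRdef
      haveI : Fintype ↥R := Fintype.ofFinite ↥R
      haveI : DecidableEq ↥R := Classical.decEq _
      set f' : G →* ↥R := f.rangeRestrict with hf'def
      have hcoe_f' : ∀ x : G, (f' x : G) = x ^ (p ^ v) := fun x => rfl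
      -- exponent of the range
      have hexpR : ∀ z : ↥R, z ^ e' = 1 := by
        intro z
        obtain ⟨x, hx⟩ := z.2
        apply Subtype.ext
        rw [SubmonoidClass.coe_pow, OneMemClass.coe_one]
        have hzx : (z : G) = x ^ (p ^ v) := by rw [← hx]; rfl
        rw [hzx, ← pow_mul, hee, hexp x]
      -- cardinal divisibility
      have hcardR : Fintype.card ↥R ∣ Fintype.card G := by
        rw [← Nat.card_eq_fintype_card, ← Nat.card_eq_fintype_card]
        exact Subgroup.card_subgroup_dvd_card R
      have hkR : ∀ q, (Fintype.card ↥R).factorization q ≤ kG q := by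
        intro q
        have h1 : (Fintype.card ↥R).factorization ≤ (Fintype.card G).factorization :=
          (Nat.factorization_le_iff_dvd Fintype.card_ne_zero Fintype.card_ne_zero).mpr hcardR
        exact h1 q
      -- zero-sum property in the range, from the induction hypothesis
      have hK : ∀ N : Multiset ↥R, b ≤ Multiset.card N →
          ∃ N' ≤ N, N' ≠ 0 ∧ N'.prod = 1 := by
        intro N hN
        apply ih e' hlt he' ↥R hexpR N
        refine le_trans ?_ hN
        rw [hbdef]
        apply Finset.prod_le_prod'
        intro q hq
        have := hkR q
        have h2 : 1 ≤ q ^ (e'.factorization q) := Nat.one_le_pow _ _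
          (Nat.pos_of_mem_primeFactors hq)
        exact Nat.add_le_add_left (Nat.mul_le_mul_right _ (hkR q)) 1
      -- zero-sum property in the kernel, from Olson's theorem
      have hker : ∀ N : Multiset ↥(f'.ker), a ≤ Multiset.card N →
          ∃ N' ≤ N, N' ≠ 0 ∧ N'.prod = 1 := by
        intro N hN
        haveI : Fintype ↥(f'.ker) := Fintype.ofFinite _
        apply olson_p ↥(f'.ker) p v hp
        · intro z
          apply Subtype.ext
          rw [SubmonoidClass.coe_pow, OneMemClass.coe_one]
          have hz := z.2
          rw [MonoidHom.mem_ker] at hz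
          have := congrArg (Subtype.val) hz
          rw [hcoe_f'] at this
          exact this
        · refine le_trans ?_ hN
          rw [hadef]
          apply Nat.add_le_add_left
          apply Nat.mul_le_mul_right
          have hdvd : Fintype.card ↥(f'.ker) ∣ Fintype.card G := by
            rw [← Nat.card_eq_fintype_card, ← Nat.card_eq_fintype_card]
            exact Subgroup.card_subgroup_dvd_card f'.ker
          have h1 : (Fintype.card ↥(f'.ker)).factorization ≤
              (Fintype.card G).factorization :=
            (Nat.factorization_le_iff_dvd Fintype.card_ne_zero Fintype.card_ne_zero).mpr hdvd
          exact h1 p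
      exact extraction f' a b hK hker M hab

end MainInduction

section ZModFacts

/-- the lcm of `q - 1` over prime factors of `L` -/
def Ebnd (L : ℕ) : ℕ := L.primeFactors.lcm (fun q => q - 1)

lemma finset_lcm_ne_zero {s : Finset ℕ} {f : ℕ → ℕ} (hf : ∀ i ∈ s, f i ≠ 0) :
    s.lcm f ≠ 0 := by
  rw [Ne, Finset.lcm_eq_zero_iff]
  rintro ⟨i, hi, h0⟩
  exact hf i hi h0

lemma Ebnd_pos (L : ℕ) : 0 < Ebnd L := by
  have h := finset_lcm_ne_zero (s := L.primeFactors) (f := fun q => q - 1)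
    (fun q hq => by
      have := (Nat.prime_of_mem_primeFactors hq).two_le
      show q - 1 ≠ 0
      omega)
  rw [Ebnd]
  omega

/-- a prime power dividing a finset lcm divides one of the values -/
lemma exists_of_pow_dvd_lcm {s : Finset ℕ} {f : ℕ → ℕ} (hf : ∀ i ∈ s, f i ≠ 0)
    {p m : ℕ} (hp : p.Prime) (hm : m ≠ 0) (h : p ^ m ∣ s.lcm f) :
    ∃ i ∈ s, p ^ m ∣ f i := by
  classical
  induction s using Finset.induction with
  | empty =>
    exfalso
    rw [Finset.lcm_empty, Nat.dvd_one] at h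
    have h2 : p ≤ p ^ m := Nat.le_self_pow hm p
    have h3 := hp.two_le
    omega
  | @insert a s ha ih =>
    rw [Finset.lcm_insert] at h
    have h1 : f a ≠ 0 := hf a (Finset.mem_insert_self a s)
    have h2 : s.lcm f ≠ 0 := finset_lcm_ne_zero (fun i hi => hf i (Finset.mem_insert_of_mem hi))
    have hlcm0 : Nat.lcm (f a) (s.lcm f) ≠ 0 := Nat.lcm_ne_zero h1 h2
    have hle : m ≤ (Nat.lcm (f a) (s.lcm f)).factorization p :=
      (Nat.Prime.pow_dvd_iff_le_factorization hp hlcm0).mp h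
    rw [Nat.factorization_lcm h1 h2] at hle
    have hsup : (f a).factorization ⊔ (s.lcm f).factorization =
        (f a).factorization ⊔ (s.lcm f).factorization := rfl
    have : m ≤ max ((f a).factorization p) ((s.lcm f).factorization p) := by
      simpa [Finsupp.sup_apply] using hle
    rcases le_max_iff.mp this with hc | hc
    · exact ⟨a, Finset.mem_insert_self a s,
        (Nat.Prime.pow_dvd_iff_le_factorization hp h1).mpr hc⟩
    · obtain ⟨i, hi, hdvd⟩ := ih (fun i hi => hf i (Finset.mem_insert_of_mem hi))
        ((Nat.Prime.pow_dvd_iff_le_factorization hp h2).mpr hc)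
      exact ⟨i, Finset.mem_insert_of_mem hi, hdvd⟩

lemma exists_of_pow_dvd_Ebnd (L : ℕ) {p m : ℕ} (hp : p.Prime) (hm : m ≠ 0)
    (h : p ^ m ∣ Ebnd L) : ∃ q ∈ L.primeFactors, p ^ m ∣ q - 1 :=
  exists_of_pow_dvd_lcm (fun q hq => by
    have := (Nat.prime_of_mem_primeFactors hq).two_le
    omega) hp hm h

/-- squarefree L: the exponent of `(ZMod L)ˣ` divides `Ebnd L`. -/
lemma units_pow_Ebnd (L : ℕ) (hL : 2 ≤ L) (hsf : Squarefree L) (u : (ZMod L)ˣ) :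
    u ^ (Ebnd L) = 1 := by
  haveI : NeZero L := ⟨by omega⟩
  apply Units.ext
  rw [Units.val_pow_eq_pow_val, Units.val_one]
  set w : ZMod L := (u : ZMod L) ^ (Ebnd L) - 1 with hw
  have hdvd : ∀ q ∈ L.primeFactors, q ∣ w.val := by
    intro q hq
    have hqp : q.Prime := Nat.prime_of_mem_primeFactors hq
    have hqd : q ∣ L := Nat.dvd_of_mem_primeFactors hq
    haveI : NeZero q := ⟨hqp.ne_zero⟩
    haveI := Fact.mk hqp
    set ψ := ZMod.castHom hqd (ZMod q) with hψ
    set vU : (ZMod q)ˣ := Units.map ψ.toMonoidHom u with hvU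
    have h3 : vU ^ (q - 1) = 1 := by
      rw [← ZMod.card_units q]
      exact pow_card_eq_one
    obtain ⟨c, hc⟩ := Finset.dvd_lcm (f := fun q => q - 1) hq
    have h4 : vU ^ (Ebnd L) = 1 := by
      rw [Ebnd, hc, pow_mul, h3, one_pow]
    have h5 := congrArg (Units.val) h4
    rw [Units.val_pow_eq_pow_val, Units.val_one] at h5
    have h1 : ψ w = 0 := by
      rw [hw, map_sub, _root_.map_one, _root_.map_pow]
      have h2 : ψ ((u : ZMod L)) = (vU : ZMod q) := rfl
      rw [h2, h5, sub_self]
    have h6 : ((w.val : ℕ) : ZMod q) = 0 := by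
      rw [ZMod.natCast_val w, ← ZMod.castHom_apply (h := hqd)]
      exact h1
    exact (ZMod.natCast_eq_zero_iff _ _).mp h6
  have hLdvd : L ∣ w.val := by
    have hprod : ∏ q ∈ L.primeFactors, q = L := Nat.prod_primeFactors_of_squarefree hsf
    have h7 : (∏ q ∈ L.primeFactors, q) ∣ w.val :=
      Finset.prod_primes_dvd _
        (fun q hq => (Nat.prime_of_mem_primeFactors hq).prime)
        (fun q hq => hdvd q hq)
    rwa [hprod] at h7
  have hw0 : w = 0 := by
    rw [← ZMod.val_eq_zero]
    have hval : w.val < L := ZMod.val_lt w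
    rcases Nat.eq_zero_or_pos w.val with h | h
    · exact h
    · exact absurd (Nat.le_of_dvd h hLdvd) (by omega)
  have := sub_eq_zero.mp hw0
  exact this

lemma card_units_le (L : ℕ) [NeZero L] : Fintype.card (ZMod L)ˣ ≤ L := by
  rw [ZMod.card_units_eq_totient]
  exact Nat.totient_le L

lemma L_le_pow4 (L : ℕ) (hsf : Squarefree L) (N : ℕ)
    (hN : ∀ q ∈ L.primeFactors, q ≤ N) : L ≤ 4 ^ N := by
  have hprod : ∏ q ∈ L.primeFactors, q = L := Nat.prod_primeFactors_of_squarefree hsf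
  have hsub : L.primeFactors ⊆ Finset.filter Nat.Prime (Finset.range (N + 1)) := by
    intro q hq
    rw [Finset.mem_filter, Finset.mem_range]
    exact ⟨by have := hN q hq; omega, Nat.prime_of_mem_primeFactors hq⟩
  calc L = ∏ q ∈ L.primeFactors, q := hprod.symm
    _ ≤ ∏ q ∈ Finset.filter Nat.Prime (Finset.range (N + 1)), q :=
        Finset.prod_le_prod_of_subset_of_one_le' hsub
          (fun q hq _ => (Finset.mem_filter.mp hq).2.one_lt.le)
    _ = primorial N := rfl
    _ ≤ 4 ^ N := primorial_le_4_pow N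

end ZModFacts

section Analytic

open Real Filter Topology

lemma Pcnt_bound (n K : ℕ) (hK : 2 ≤ K) :
    ((Finset.filter Nat.Prime (Finset.range (n + 1))).card : ℝ)
      ≤ ((K : ℝ) + 1) + ((n : ℝ) * Real.log 4) / Real.log K := by
  classical
  set S := Finset.filter (fun p => p.Prime ∧ K < p) (Finset.range (n + 1)) with hS
  have h1 : K ^ S.card ≤ 4 ^ n := by
    calc K ^ S.card ≤ ∏ p ∈ S, p :=
          Finset.pow_card_le_prod S _ K
            (fun p hp => le_of_lt (Finset.mem_filter.mp hp).2.2)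
      _ ≤ ∏ p ∈ Finset.filter Nat.Prime (Finset.range (n+1)), p :=
          Finset.prod_le_prod_of_subset_of_one_le'
            (fun p hp => by
              rw [Finset.mem_filter] at hp ⊢
              exact ⟨hp.1, hp.2.1⟩)
            (fun p hp _ => (Finset.mem_filter.mp hp).2.one_lt.le)
      _ = primorial n := rfl
      _ ≤ 4 ^ n := primorial_le_4_pow n
  have h2 : (Finset.filter Nat.Prime (Finset.range (n + 1))).card ≤ S.card + (K + 1) := by
    have hsub : Finset.filter Nat.Prime (Finset.range (n + 1)) ⊆ S ∪ Finset.range (K + 1) := by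
      intro p hp
      rw [Finset.mem_union]
      rcases le_or_gt p K with h | h
      · right; rw [Finset.mem_range]; omega
      · left
        rw [hS, Finset.mem_filter]
        exact ⟨(Finset.mem_filter.mp hp).1, (Finset.mem_filter.mp hp).2, h⟩
    calc (Finset.filter Nat.Prime (Finset.range (n + 1))).card
        ≤ (S ∪ Finset.range (K + 1)).card := Finset.card_le_card hsub
      _ ≤ S.card + (K + 1) := le_trans (Finset.card_union_le _ _)
          (by rw [Finset.card_range])
  have hK1 : (1 : ℝ) < (K : ℝ) := by exact_mod_cast hK.trans_lt' (by norm_num)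
  have hlogK : 0 < Real.log K := Real.log_pos hK1
  have h3 : (S.card : ℝ) * Real.log K ≤ (n : ℝ) * Real.log 4 := by
    have hc : ((K : ℝ)) ^ S.card ≤ ((4 : ℝ)) ^ n := by exact_mod_cast h1
    have := Real.log_le_log (by positivity) hc
    rwa [Real.log_pow, Real.log_pow] at this
  have h4 : (S.card : ℝ) ≤ (n : ℝ) * Real.log 4 / Real.log K := by
    rw [le_div_iff₀ hlogK]
    exact h3
  calc ((Finset.filter Nat.Prime (Finset.range (n + 1))).card : ℝ)
      ≤ (S.card : ℝ) + ((K : ℝ) + 1) := by exact_mod_cast h2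
    _ ≤ ((K : ℝ) + 1) + ((n : ℝ) * Real.log 4) / Real.log K := by linarith

set_option maxHeartbeats 1000000 in
lemma an_main : ∀ᶠ (y : ℝ) in atTop,
    ((Finset.filter Nat.Prime (Finset.range (⌊y⌋₊ + 1))).card : ℝ)
      * (Real.log 2 + 2 * Real.log y) ≤ 3 * y := by
  have t1 : Tendsto (fun y : ℝ => y / (Real.log y) ^ 2) atTop atTop := by
    have h := (Real.tendsto_exp_div_pow_atTop 2).comp Real.tendsto_log_atTop
    apply h.congr'
    filter_upwards [eventually_gt_atTop (0:ℝ)] with y hy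
    simp only [Function.comp_apply, Real.exp_log hy]
  have tll : Tendsto (fun y : ℝ => Real.log (Real.log y) / Real.log y) atTop (𝓝 0) :=
    (Real.isLittleO_log_id_atTop.tendsto_div_nhds_zero).comp Real.tendsto_log_atTop
  have tly : Tendsto (fun y : ℝ => Real.log y / y) atTop (𝓝 0) :=
    Real.isLittleO_log_id_atTop.tendsto_div_nhds_zero
  filter_upwards [eventually_ge_atTop (3:ℝ),
    Real.tendsto_log_atTop.eventually_ge_atTop (100:ℝ),
    t1.eventually_ge_atTop (2:ℝ),
    tll.eventually_lt_const (by norm_num : (0:ℝ) < 1/100),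
    tly.eventually_lt_const (by norm_num : (0:ℝ) < 1/402)] with y h3 h100 hu hll hly
  have hy0 : (0:ℝ) < y := by linarith
  have hlog0 : (0:ℝ) < Real.log y := by linarith
  set u : ℝ := y / (Real.log y) ^ 2 with hudef
  set K : ℕ := ⌊u⌋₊ with hKdefN
  have hK2 : 2 ≤ K := Nat.le_floor (by exact_mod_cast hu)
  have hKu : (K : ℝ) ≤ u := Nat.floor_le (by positivity)
  have hKu2 : u / 2 ≤ (K : ℝ) := by
    have := Nat.lt_floor_add_one u
    have : u - 1 ≤ (K : ℝ) := by
      have := Nat.lt_floor_add_one u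
      linarith
    linarith
  -- log bounds
  have hll' : Real.log (Real.log y) ≤ (1/100) * Real.log y := by
    have := hll
    rw [div_lt_iff₀ hlog0] at this
    linarith
  have hl2 : Real.log 2 ≤ (1/100) * Real.log y := by
    have h2 : Real.log 2 ≤ 1 := by
      have := Real.log_two_lt_d9
      linarith
    linarith
  have hlogu : Real.log u = Real.log y - 2 * Real.log (Real.log y) := by
    rw [hudef, Real.log_div (by positivity) (by positivity), Real.log_pow]
    push_cast
    ring
  have hlogK : (97/100) * Real.log y ≤ Real.log K := by
    have h5 : Real.log (u/2) ≤ Real.log K :=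
      Real.log_le_log (by positivity) hKu2
    have h6 : Real.log (u/2) = Real.log u - Real.log 2 := by
      rw [Real.log_div (by positivity) (by norm_num)]
    rw [h6, hlogu] at h5
    linarith
  have hlogK0 : (0:ℝ) < Real.log K := by linarith
  -- the prime-count bound
  have hP := Pcnt_bound ⌊y⌋₊ K hK2
  have hfy : (⌊y⌋₊ : ℝ) ≤ y := Nat.floor_le (by positivity)
  have hlog4 : (0:ℝ) < Real.log 4 := Real.log_pos (by norm_num)
  set A := Real.log y with hAdef
  have hstep : ((⌊y⌋₊ : ℝ) * Real.log 4) / Real.log K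
      ≤ (y * Real.log 4) / ((97/100) * A) := by
    apply div_le_div₀ (by positivity)
      (by nlinarith) (by positivity) hlogK
  have e1 : ((Finset.filter Nat.Prime (Finset.range (⌊y⌋₊ + 1))).card : ℝ)
      ≤ (u + 1) + (y * Real.log 4) / ((97/100) * A) := by
    calc ((Finset.filter Nat.Prime (Finset.range (⌊y⌋₊ + 1))).card : ℝ)
        ≤ ((K : ℝ) + 1) + ((⌊y⌋₊ : ℝ) * Real.log 4) / Real.log K := hP
      _ ≤ (u + 1) + (y * Real.log 4) / ((97/100) * A) := by
          have := hstep
          linarith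
  have e2 : Real.log 2 + 2 * A ≤ (201/100) * A := by linarith
  have e4 : (0:ℝ) ≤ Real.log 2 + 2 * A := by
    have := Real.log_nonneg (by norm_num : (1:ℝ) ≤ 2)
    linarith
  have e5 : (0:ℝ) ≤ (u + 1) + (y * Real.log 4) / ((97/100) * A) := by positivity
  have emul : ((Finset.filter Nat.Prime (Finset.range (⌊y⌋₊ + 1))).card : ℝ)
      * (Real.log 2 + 2 * A)
      ≤ ((u + 1) + (y * Real.log 4) / ((97/100) * A)) * ((201/100) * A) :=
    mul_le_mul e1 e2 e4 e5
  have hA0 : A ≠ 0 := by linarith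
  have hsimp : ((u + 1) + (y * Real.log 4) / ((97/100) * A)) * ((201/100) * A)
      = (201/100) * (y / A) + (201/100) * A + (201/97) * Real.log 4 * y := by
    rw [hudef]
    field_simp
  have hyA : y / A ≤ y / 100 := div_le_div_of_nonneg_left (by positivity) (by norm_num) h100
  have hAy : A ≤ y / 402 := by
    rw [div_lt_iff₀ hy0] at hly
    linarith
  have hlog4' : Real.log 4 ≤ 13863/10000 := by
    have h4 : (4:ℝ) = 2 ^ (2:ℕ) := by norm_num
    rw [h4, Real.log_pow]
    have := Real.log_two_lt_d9
    push_cast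
    linarith
  have hfin : (201/100) * (y / A) + (201/100) * A + (201/97) * Real.log 4 * y ≤ 3 * y := by
    have h1 : (201/100) * (y / A) ≤ (201/100) * (y/100) :=
      mul_le_mul_of_nonneg_left hyA (by norm_num)
    have h2 : (201/97) * Real.log 4 * y ≤ (201/97) * (13863/10000) * y := by
      apply mul_le_mul_of_nonneg_right _ (le_of_lt hy0)
      exact mul_le_mul_of_nonneg_left hlog4' (by norm_num)
    linarith [h1, h2, hAy]
  calc ((Finset.filter Nat.Prime (Finset.range (⌊y⌋₊ + 1))).card : ℝ)
      * (Real.log 2 + 2 * Real.log y)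
      = ((Finset.filter Nat.Prime (Finset.range (⌊y⌋₊ + 1))).card : ℝ)
        * (Real.log 2 + 2 * A) := rfl
    _ ≤ ((u + 1) + (y * Real.log 4) / ((97/100) * A)) * ((201/100) * A) := emul
    _ = (201/100) * (y / A) + (201/100) * A + (201/97) * Real.log 4 * y := hsimp
    _ ≤ 3 * y := hfin

end Analytic

section Final

open Real Filter

set_option maxHeartbeats 1000000 in
/-- For sufficiently large `y`: if `L` is squarefree, every prime `q ∣ L` satisfies
`q ≤ y ^ θ`, and every prime factor of `q - 1` is at most `y`, then every multiset
of elements of `(ℤ/Lℤ)ˣ` of cardinality at least `exp (3 θ y)` contains a nonempty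
sub-multiset whose product is `1`. -/
theorem davenport_bound_smooth :
    ∃ Y : ℝ, ∀ y : ℝ, Y ≤ y → ∀ θ : ℝ, 1 < θ → θ < 2 →
      ∀ L : ℕ, 2 ≤ L → Squarefree L →
        (∀ q : ℕ, q.Prime → q ∣ L →
          (q : ℝ) ≤ y ^ θ ∧ ∀ r : ℕ, r.Prime → r ∣ q - 1 → (r : ℝ) ≤ y) →
        ∀ M : Multiset (ZMod L)ˣ, Real.exp (3 * θ * y) ≤ (Multiset.card M : ℝ) →
          ∃ M' ≤ M, M' ≠ 0 ∧ M'.prod = 1 := by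
  obtain ⟨Y, hY⟩ := Filter.eventually_atTop.mp (an_main.and (eventually_ge_atTop (3:ℝ)))
  refine ⟨Y, ?_⟩
  intro y hy θ hθ1 hθ2 L hL hsf hprimes M hM
  obtain ⟨hPy, hy3⟩ := hY y hy
  haveI : NeZero L := ⟨by omega⟩
  haveI : DecidableEq (ZMod L)ˣ := Classical.decEq _
  have hy0 : (0:ℝ) < y := by linarith
  have hlogy : (0:ℝ) < Real.log y := Real.log_pos (by linarith)
  have hyθ : (3:ℝ) ≤ y ^ θ := by
    have h1 : y ^ (1:ℝ) ≤ y ^ θ :=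
      Real.rpow_le_rpow_of_exponent_le (by linarith) (le_of_lt hθ1)
    rw [Real.rpow_one] at h1
    linarith
  have hyθ0 : (0:ℝ) < y ^ θ := by linarith
  set N₁ : ℕ := ⌊y ^ θ⌋₊ with hN₁def
  have hN₁3 : 3 ≤ N₁ := Nat.le_floor (by exact_mod_cast hyθ)
  have hN₁le : (N₁ : ℝ) ≤ y ^ θ := Nat.floor_le (le_of_lt hyθ0)
  have hqN : ∀ q ∈ L.primeFactors, q ≤ N₁ := by
    intro q hq
    have hqp := Nat.prime_of_mem_primeFactors hq
    have hqd := Nat.dvd_of_mem_primeFactors hq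
    exact Nat.le_floor (hprimes q hqp hqd).1
  have hcardG : Fintype.card (ZMod L)ˣ ≤ 4 ^ N₁ :=
    le_trans (card_units_le L) (L_le_pow4 L hsf N₁ hqN)
  have hcardG0 : Fintype.card (ZMod L)ˣ ≠ 0 := Fintype.card_ne_zero
  set E : ℕ := Ebnd L with hEdef
  have hE : 0 < E := Ebnd_pos L
  have hexp : ∀ u : (ZMod L)ˣ, u ^ E = 1 := units_pow_Ebnd L hL hsf
  set P : ℕ := (Finset.filter Nat.Prime (Finset.range (⌊y⌋₊ + 1))).card with hPdef
  -- step (i): each factor is at most 2 * N₁ ^ 2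
  have hfac : ∀ p ∈ E.primeFactors,
      1 + (Fintype.card (ZMod L)ˣ).factorization p * (p ^ (E.factorization p) - 1) ≤ 2 * N₁ ^ 2 := by
    intro p hp
    have hpp : p.Prime := Nat.prime_of_mem_primeFactors hp
    have hpd : p ∣ E := Nat.dvd_of_mem_primeFactors hp
    set m := E.factorization p with hmdef
    have hm : m ≠ 0 := by
      have := Nat.Prime.factorization_pos_of_dvd hpp (by omega) hpd
      omega
    have hpmE : p ^ m ∣ E := Nat.ordProj_dvd E p
    obtain ⟨q, hqL, hqdvd⟩ := exists_of_pow_dvd_Ebnd L hpp hm hpmE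
    have hqp := Nat.prime_of_mem_primeFactors hqL
    have hq2 := hqp.two_le
    have hq1pos : 0 < q - 1 := by omega
    have hpm_le : p ^ m ≤ q - 1 := Nat.le_of_dvd hq1pos hqdvd
    have hqN₁ : q ≤ N₁ := hqN q hqL
    have hpm_le' : p ^ m ≤ N₁ - 1 := by omega
    -- k ≤ 2 N₁
    set k := (Fintype.card (ZMod L)ˣ).factorization p with hkdef
    have hk2N : k ≤ 2 * N₁ := by
      have h1 : p ^ k ∣ Fintype.card (ZMod L)ˣ := Nat.ordProj_dvd _ p
      have h2 : p ^ k ≤ Fintype.card (ZMod L)ˣ := Nat.le_of_dvd (by omega) h1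
      have h3 : 2 ^ k ≤ p ^ k := Nat.pow_le_pow_left hpp.two_le k
      have h4 : (2:ℕ) ^ k ≤ 2 ^ (2 * N₁) := by
        calc (2:ℕ) ^ k ≤ Fintype.card (ZMod L)ˣ := le_trans h3 h2
          _ ≤ 4 ^ N₁ := hcardG
          _ = 2 ^ (2 * N₁) := by rw [pow_mul]; norm_num
      exact (Nat.pow_le_pow_iff_right (by norm_num)).mp h4
    have hstep : k * (p ^ m - 1) ≤ (2 * N₁) * (N₁ - 2) :=
      Nat.mul_le_mul hk2N (by omega)
    have hkey : 1 + (2 * N₁) * (N₁ - 2) ≤ 2 * N₁ ^ 2 := by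
      obtain ⟨c, hc⟩ : ∃ c, N₁ = c + 3 := ⟨N₁ - 3, by omega⟩
      rw [hc]
      have h32 : (c + 3) - 2 = c + 1 := by omega
      rw [h32]
      nlinarith
    omega
  -- step (ii): primeFactors of E are small primes
  have hsubP : E.primeFactors ⊆ Finset.filter Nat.Prime (Finset.range (⌊y⌋₊ + 1)) := by
    intro p hp
    have hpp : p.Prime := Nat.prime_of_mem_primeFactors hp
    have hpd : p ∣ E := Nat.dvd_of_mem_primeFactors hp
    obtain ⟨q, hqL, hqdvd⟩ := exists_of_pow_dvd_Ebnd L hpp (m := 1) one_ne_zero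
      (by rw [pow_one]; exact hpd)
    rw [pow_one] at hqdvd
    have hqp := Nat.prime_of_mem_primeFactors hqL
    have hqd := Nat.dvd_of_mem_primeFactors hqL
    have hry := (hprimes q hqp hqd).2 p hpp hqdvd
    have hpfloor : p ≤ ⌊y⌋₊ := Nat.le_floor hry
    rw [Finset.mem_filter, Finset.mem_range]
    exact ⟨by omega, hpp⟩
  have hBle : (∏ p ∈ E.primeFactors,
      (1 + (Fintype.card (ZMod L)ˣ).factorization p * (p ^ (E.factorization p) - 1)))
      ≤ (2 * N₁ ^ 2) ^ P := by
    calc (∏ p ∈ E.primeFactors,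
        (1 + (Fintype.card (ZMod L)ˣ).factorization p * (p ^ (E.factorization p) - 1)))
        ≤ (2 * N₁ ^ 2) ^ E.primeFactors.card :=
          Finset.prod_le_pow_card _ _ _ hfac
      _ ≤ (2 * N₁ ^ 2) ^ P := Nat.pow_le_pow_right (by positivity)
          (Finset.card_le_card hsubP)
  -- step (iii): real comparison
  have hreal : (((2 * N₁ ^ 2) ^ P : ℕ) : ℝ) ≤ Real.exp (3 * θ * y) := by
    have hbase : ((2 * N₁ ^ 2 : ℕ) : ℝ) ≤ 2 * (y ^ θ) ^ (2:ℕ) := by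
      push_cast
      have h9 : ((N₁:ℝ)) ^ (2:ℕ) ≤ (y ^ θ) ^ (2:ℕ) :=
        pow_le_pow_left₀ (by positivity) hN₁le 2
      nlinarith [h9]
    have hbase0 : (0:ℝ) ≤ ((2 * N₁ ^ 2 : ℕ) : ℝ) := by positivity
    have h1 : (((2 * N₁ ^ 2) ^ P : ℕ) : ℝ) ≤ (2 * (y ^ θ) ^ (2:ℕ)) ^ P := by
      push_cast
      exact pow_le_pow_left₀ (by positivity) (by push_cast at hbase ⊢; linarith) P
    refine le_trans h1 ?_
    have hpos : (0:ℝ) < 2 * (y ^ θ) ^ (2:ℕ) := by positivity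
    rw [← Real.exp_log (pow_pos hpos P), Real.exp_le_exp]
    rw [Real.log_pow, Real.log_mul (by norm_num) (by positivity), Real.log_pow,
      Real.log_rpow hy0]
    -- (P : ℝ) * (log 2 + 2 * (θ * log y)) ≤ 3 * θ * y
    have hP0 : (0:ℝ) ≤ (P:ℝ) := Nat.cast_nonneg P
    have hlog2 : (0:ℝ) ≤ Real.log 2 := Real.log_nonneg (by norm_num)
    have hθ0 : (0:ℝ) ≤ θ := by linarith
    have hmul := mul_le_mul_of_nonneg_left hPy hθ0
    push_cast
    nlinarith [hmul, mul_nonneg (mul_nonneg (show (0:ℝ) ≤ θ - 1 by linarith) hP0) hlog2]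
  -- conclude
  have hfinal : (∏ p ∈ E.primeFactors,
      (1 + (Fintype.card (ZMod L)ˣ).factorization p * (p ^ (E.factorization p) - 1)))
      ≤ Multiset.card M := by
    have h1 : ((∏ p ∈ E.primeFactors,
        (1 + (Fintype.card (ZMod L)ˣ).factorization p * (p ^ (E.factorization p) - 1)) : ℕ) : ℝ)
        ≤ (Multiset.card M : ℝ) := by
      calc ((∏ p ∈ E.primeFactors,
          (1 + (Fintype.card (ZMod L)ˣ).factorization p * (p ^ (E.factorization p) - 1)) : ℕ) : ℝ)
          ≤ (((2 * N₁ ^ 2) ^ P : ℕ) : ℝ) := by exact_mod_cast hBle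
        _ ≤ Real.exp (3 * θ * y) := hreal
        _ ≤ (Multiset.card M : ℝ) := hM
    exact_mod_cast h1
  exact davenport_main E hE (ZMod L)ˣ hexp M hfinal

end Final
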